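/- Let $\tau \in M_{n+1}(\mathbb{C})$ be such that the minimal polynomial of $\tau$ has degree at most $n$ (i.e., $\tau$ is not regular). Then $\det D(\tau) = 0$, where $D(\tau)_{ij} = \mathrm{tr}([1_H,[\tau^i, \tau_H^{j-1}]]\,\tau)$. -/

import Mathlib

open Matrix

/-- `1_H = diag(1,…,1,0)` as an `(n+1) × (n+1)` complex matrix. -/
noncomputable def oneHmat (n : ℕ) : Matrix (Fin (n + 1)) (Fin (n + 1)) ℂ :=
  Matrix.diagonal fun i => if i = Fin.last n then 0 else 1

/-- `τ_H := 1_H τ 1_H`, as an `(n+1) × (n+1)` matrix. -/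
noncomputable def tauHmat (n : ℕ) (τ : Matrix (Fin (n + 1)) (Fin (n + 1)) ℂ) :
    Matrix (Fin (n + 1)) (Fin (n + 1)) ℂ :=
  oneHmat n * τ * oneHmat n

/-- The `n × n` matrix `D(τ)` with (1-based) entries
`D(τ)_{ij} = tr([1_H, [τ^i, τ_H^{j-1}]] τ)`, where `τ_H^{j-1} := 1_H (τ_H)^{j-1}`. -/
noncomputable def Dmat (n : ℕ) (τ : Matrix (Fin (n + 1)) (Fin (n + 1)) ℂ) :
    Matrix (Fin n) (Fin n) ℂ :=
  Matrix.of fun i j : Fin n =>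
    Matrix.trace
      ((oneHmat n *
            (τ ^ ((i : ℕ) + 1) * (oneHmat n * tauHmat n τ ^ (j : ℕ)) -
              (oneHmat n * tauHmat n τ ^ (j : ℕ)) * τ ^ ((i : ℕ) + 1)) -
          (τ ^ ((i : ℕ) + 1) * (oneHmat n * tauHmat n τ ^ (j : ℕ)) -
              (oneHmat n * tauHmat n τ ^ (j : ℕ)) * τ ^ ((i : ℕ) + 1)) * oneHmat n) * τ)

/-- If the minimal polynomial of `τ` has degree at most `n` (i.e. `τ` is not regular),
then `det D(τ) = 0`. -/
theorem stmt7 (n : ℕ) (τ : Matrix (Fin (n + 1)) (Fin (n + 1)) ℂ)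
    (hmin : (minpoly ℂ τ).natDegree ≤ n) :
    (Dmat n τ).det = 0 := by
  -- the linear functional x ↦ tr((1_H [x, M] - [x, M] 1_H) τ) for M = 1_H τ_H^j
  set A := oneHmat n with hA
  let F : Fin n → Matrix (Fin (n+1)) (Fin (n+1)) ℂ →ₗ[ℂ] ℂ := fun j =>
    (Matrix.traceLinearMap (Fin (n+1)) ℂ ℂ).comp
      ((LinearMap.mulRight ℂ τ).comp
        (((LinearMap.mulLeft ℂ A - LinearMap.mulRight ℂ A)).comp
          (LinearMap.mulRight ℂ (A * tauHmat n τ ^ (j : ℕ)) -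
            LinearMap.mulLeft ℂ (A * tauHmat n τ ^ (j : ℕ)))))
  have hF : ∀ i j : Fin n, Dmat n τ i j = F j (τ ^ ((i : ℕ) + 1)) := by
    intro i j
    simp only [F, Dmat, LinearMap.coe_comp, Function.comp_apply, LinearMap.sub_apply,
      LinearMap.mulLeft_apply, LinearMap.mulRight_apply, Matrix.of_apply,
      Matrix.traceLinearMap_apply, mul_assoc, hA]
  have hFscalar : ∀ (j : Fin n) (c : ℂ), F j (c • (1 : Matrix (Fin (n+1)) (Fin (n+1)) ℂ)) = 0 := by
    intro j c
    have h0 : (LinearMap.mulRight ℂ (A * tauHmat n τ ^ (j : ℕ)) -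
        LinearMap.mulLeft ℂ (A * tauHmat n τ ^ (j : ℕ)))
        (c • (1 : Matrix (Fin (n+1)) (Fin (n+1)) ℂ)) = 0 := by
      simp [LinearMap.mulLeft_apply, LinearMap.mulRight_apply, Matrix.smul_mul,
        Matrix.mul_smul]
    simp [F, h0]
  -- linear dependence from the minimal polynomial
  set p := minpoly ℂ τ with hp
  have hint : IsIntegral ℂ τ := Algebra.IsIntegral.isIntegral τ
  have hd1 : 0 < p.natDegree := minpoly.natDegree_pos hint
  have haev : (Polynomial.aeval τ) p = 0 := minpoly.aeval ℂ τ
  have hsum : ∑ k ∈ Finset.range (n + 1), p.coeff k • τ ^ k = 0 := by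
    rw [← Polynomial.aeval_eq_sum_range' (by omega : p.natDegree < n + 1), haev]
  set v : Fin n → ℂ := fun i => p.coeff ((i : ℕ) + 1) with hv
  have hvne : v ≠ 0 := by
    intro h
    have hlt : p.natDegree - 1 < n := by omega
    have := congrFun h ⟨p.natDegree - 1, hlt⟩
    simp only [hv, Pi.zero_apply] at this
    rw [(by omega : p.natDegree - 1 + 1 = p.natDegree),
      Polynomial.Monic.coeff_natDegree (minpoly.monic hint)] at this
    exact one_ne_zero this
  have hcomb : ∑ i : Fin n, v i • τ ^ ((i : ℕ) + 1)
      = (-(p.coeff 0)) • (1 : Matrix (Fin (n+1)) (Fin (n+1)) ℂ) := by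
    have := Finset.sum_range_succ' (fun k => p.coeff k • τ ^ k) n
    rw [hsum] at this
    have h2 : ∑ i ∈ Finset.range n, p.coeff (i + 1) • τ ^ (i + 1)
        = -(p.coeff 0 • (1 : Matrix (Fin (n+1)) (Fin (n+1)) ℂ)) := by
      rw [eq_neg_iff_add_eq_zero]
      simpa using this.symm
    rw [Fin.sum_univ_eq_sum_range (fun k => p.coeff (k + 1) • τ ^ (k + 1)) n]
    simpa [neg_smul] using h2
  -- conclude
  rw [← Matrix.exists_vecMul_eq_zero_iff]
  refine ⟨v, hvne, ?_⟩
  funext j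
  have : ∑ i : Fin n, v i * Dmat n τ i j = 0 := by
    calc ∑ i : Fin n, v i * Dmat n τ i j
        = F j (∑ i : Fin n, v i • τ ^ ((i : ℕ) + 1)) := by
          rw [map_sum]; simp [hF, smul_eq_mul]
      _ = 0 := by rw [hcomb]; exact hFscalar j _
  simpa [Matrix.vecMul, dotProduct] using this
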